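/- (Combining Lemmas 1 and 2) With the setup of Lemma 2, H(G | A) ≤ 1 + (1 - p_α) log₂(Σ_{j=0}^{α} C(D,j)) + p_α · D, and hence if D > log₂(Σ_{j=0}^{α} C(D,j)) then p_α ≥ (H(G | A) − 1 − log₂(Σ_{j=0}^{α} C(D,j))) / (D − log₂(Σ_{j=0}^{α} C(D,j))). -/

import Mathlib

open Finset

noncomputable section

open scoped Classical

variable {Ω : Type*}

/-- Probability of the event `A` under the mass function `p` on a finite sample space. -/
def pr [Fintype Ω] (p : Ω → ℝ) (A : Ω → Prop) : ℝ :=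
  ∑ ω, if A ω then p ω else 0

/-- `p` is a probability mass function on the finite sample space `Ω`. -/
def IsPMF [Fintype Ω] (p : Ω → ℝ) : Prop :=
  (∀ ω, 0 ≤ p ω) ∧ ∑ ω, p ω = 1

/-- Shannon entropy (in bits) of the random variable `X` under `p`
(with the convention `0 · log 0 = 0` built into `Real.negMulLog`). -/
def ent [Fintype Ω] (p : Ω → ℝ) {S : Type*} [Fintype S] (X : Ω → S) : ℝ :=
  ∑ s, Real.negMulLog (pr p fun ω => X ω = s) / Real.log 2

/-- Conditional Shannon entropy `H(X | Y)` (in bits), via the chain rule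
`H(X | Y) = H(X, Y) - H(Y)`. -/
def condEnt [Fintype Ω] (p : Ω → ℝ) {S T : Type*} [Fintype S] [Fintype T]
    (X : Ω → S) (Y : Ω → T) : ℝ :=
  ent p (fun ω => (X ω, Y ω)) - ent p Y

/-- Mutual information `I(X ; Y)` (in bits). -/
def mutInf [Fintype Ω] (p : Ω → ℝ) {S T : Type*} [Fintype S] [Fintype T]
    (X : Ω → S) (Y : Ω → T) : ℝ :=
  ent p X + ent p Y - ent p fun ω => (X ω, Y ω)

/-- The conditional mass function of `p` given the event `A`
(the zero function if `A` has probability zero). -/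
def condPMF [Fintype Ω] (p : Ω → ℝ) (A : Ω → Prop) : Ω → ℝ :=
  fun ω => if A ω then p ω / pr p A else 0

/-- `X → Y → A` is a Markov chain: `A` is conditionally independent of `X` given `Y`
(stated in multiplied-out form to avoid division). -/
def MarkovChain [Fintype Ω] (p : Ω → ℝ) {S T U : Type*}
    (X : Ω → S) (Y : Ω → T) (A : Ω → U) : Prop :=
  ∀ (x : S) (y : T) (a : U), 0 < pr p (fun ω => X ω = x ∧ Y ω = y) →
    pr p (fun ω => A ω = a ∧ Y ω = y ∧ X ω = x) * pr p (fun ω => Y ω = y) =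
      pr p (fun ω => A ω = a ∧ Y ω = y) * pr p (fun ω => X ω = x ∧ Y ω = y)

/-- `V(α) = Σ_{j=0}^{α} C(D, j)`, the size of a Hamming ball of radius `α` in `{0,1}^D`. -/
def Vball (D α : ℕ) : ℕ :=
  ∑ j ∈ Finset.range (α + 1), D.choose j

/-- The binary entropy function (in bits). -/
def binEnt (q : ℝ) : ℝ :=
  -(q * Real.logb 2 q) - (1 - q) * Real.logb 2 (1 - q)


section lemmas
variable [Fintype Ω] {p : Ω → ℝ}

lemma pr_nonneg (hp : IsPMF p) (A : Ω → Prop) : 0 ≤ pr p A := by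
  refine Finset.sum_nonneg fun ω _ => ?_
  split <;> simp [hp.1 ω]

lemma pr_congr {A B : Ω → Prop} (h : ∀ ω, A ω ↔ B ω) : pr p A = pr p B := by
  unfold pr; exact Finset.sum_congr rfl fun ω _ => by rw [h ω]

lemma pr_mono (hp : IsPMF p) {A B : Ω → Prop} (h : ∀ ω, A ω → B ω) : pr p A ≤ pr p B := by
  refine Finset.sum_le_sum fun ω _ => ?_
  by_cases hA : A ω
  · simp [hA, h ω hA]
  · simp only [hA, if_neg, if_false]
    split <;> simp [hp.1 ω]

lemma pr_le_one (hp : IsPMF p) (A : Ω → Prop) : pr p A ≤ 1 := by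
  calc pr p A ≤ ∑ ω, p ω := Finset.sum_le_sum fun ω _ => by split <;> simp [hp.1 ω]
  _ = 1 := hp.2

/-- marginalization -/
lemma sum_pr_and {S : Type*} [Fintype S] (C : Ω → Prop) (X : Ω → S) :
    ∑ s, pr p (fun ω => C ω ∧ X ω = s) = pr p C := by
  unfold pr
  rw [Finset.sum_comm]
  refine Finset.sum_congr rfl fun ω _ => ?_
  by_cases hC : C ω
  · simp [hC]
  · simp [hC]

lemma sum_pr_eq_one (hp : IsPMF p) {S : Type*} [Fintype S] (X : Ω → S) :
    ∑ s, pr p (fun ω => X ω = s) = 1 := by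
  have := sum_pr_and (p := p) (fun _ => True) X
  simp only [true_and] at this
  rw [this]
  unfold pr; simp [hp.2]

end lemmas

/-- Gibbs-type inequality: cross-entropy bound. -/
lemma gibbs {ι : Type*} (s : Finset ι) (q r : ι → ℝ)
    (hq : ∀ x ∈ s, 0 ≤ q x) (hr : ∀ x ∈ s, 0 ≤ r x)
    (hq1 : ∑ x ∈ s, q x = 1) (hr1 : ∑ x ∈ s, r x ≤ 1)
    (h : ∀ x ∈ s, 0 < q x → 0 < r x) :
    ∑ x ∈ s, Real.negMulLog (q x) ≤ ∑ x ∈ s, -(q x * Real.log (r x)) := by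
  rw [← sub_nonpos, ← Finset.sum_sub_distrib]
  calc ∑ x ∈ s, (Real.negMulLog (q x) - -(q x * Real.log (r x)))
      ≤ ∑ x ∈ s, (r x - q x) := by
        refine Finset.sum_le_sum fun x hx => ?_
        rcases eq_or_lt_of_le (hq x hx) with h0 | h0
        · simp only [← h0, Real.negMulLog, neg_zero, zero_mul, sub_zero, neg_mul, sub_self]
          simpa using hr x hx
        · have hrx := h x hx h0
          have : Real.negMulLog (q x) - -(q x * Real.log (r x))
              = q x * Real.log (r x / q x) := by
            rw [Real.log_div (ne_of_gt hrx) (ne_of_gt h0), Real.negMulLog]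
            ring
          rw [this]
          have hlog := Real.log_le_sub_one_of_pos (div_pos hrx h0)
          calc q x * Real.log (r x / q x) ≤ q x * (r x / q x - 1) :=
                mul_le_mul_of_nonneg_left hlog h0.le
            _ = r x - q x := by field_simp
    _ = (∑ x ∈ s, r x) - 1 := by rw [Finset.sum_sub_distrib, hq1]
    _ ≤ 0 := by linarith

/-- Max entropy: a distribution on a finite set has entropy at most `log card`. -/
lemma maxEnt {ι : Type*} (s : Finset ι) (q : ι → ℝ)
    (hq : ∀ x ∈ s, 0 ≤ q x) (hq1 : ∑ x ∈ s, q x = 1) :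
    ∑ x ∈ s, Real.negMulLog (q x) ≤ Real.log s.card := by
  have hcard : 0 < (s.card : ℝ) := by
    have : s.Nonempty := Finset.nonempty_of_sum_ne_zero (by rw [hq1]; norm_num)
    exact_mod_cast Finset.card_pos.2 this
  have := gibbs s q (fun _ => (s.card : ℝ)⁻¹) hq (fun x _ => by positivity)
    hq1 (by rw [Finset.sum_const, nsmul_eq_mul, mul_inv_cancel₀ (ne_of_gt hcard)])
    (fun x _ _ => by positivity)
  calc ∑ x ∈ s, Real.negMulLog (q x)
      ≤ ∑ x ∈ s, -(q x * Real.log (s.card : ℝ)⁻¹) := this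
    _ = Real.log s.card * ∑ x ∈ s, q x := by
        rw [Finset.mul_sum]
        refine Finset.sum_congr rfl fun x _ => ?_
        rw [Real.log_inv]; ring
    _ = Real.log s.card := by rw [hq1, mul_one]

section main
variable [Fintype Ω] {p : Ω → ℝ}

/-- natural-log entropy -/
def entNat [Fintype Ω] (p : Ω → ℝ) {S : Type*} [Fintype S] (X : Ω → S) : ℝ :=
  ∑ s, Real.negMulLog (pr p fun ω => X ω = s)

lemma ent_eq_entNat {S : Type*} [Fintype S] (X : Ω → S) :
    ent p X = entNat p X / Real.log 2 := by
  rw [ent, entNat, Finset.sum_div]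

lemma entNat_comp_inj {S T : Type*} [Fintype S] [Fintype T] (X : Ω → S)
    (f : S → T) (hf : Function.Injective f) :
    entNat p (fun ω => f (X ω)) = entNat p X := by
  unfold entNat
  have h0 : ∀ t ∉ Finset.univ.image f, pr p (fun ω => f (X ω) = t) = 0 := by
    intro t ht
    exact Finset.sum_eq_zero fun ω _ =>
      if_neg fun h => ht (Finset.mem_image.2 ⟨X ω, Finset.mem_univ _, h⟩)
  rw [← Finset.sum_subset (Finset.subset_univ (Finset.univ.image f))
      (fun t _ ht => by rw [h0 t ht, Real.negMulLog_zero]),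
    Finset.sum_image (fun x _ y _ h => hf h)]
  exact Finset.sum_congr rfl fun x _ => by
    congr 1
    exact pr_congr fun ω => ⟨fun h => hf h, fun h => by simp [h]⟩

lemma entNat_pair_le {S T : Type*} [Fintype S] [Fintype T] (hp : IsPMF p)
    (X : Ω → S) (Y : Ω → T) :
    entNat p (fun ω => (X ω, Y ω)) ≤ entNat p X + entNat p Y := by
  have hmargX : ∀ s, ∑ t, pr p (fun ω => X ω = s ∧ Y ω = t) = pr p (fun ω => X ω = s) :=
    fun s => sum_pr_and (fun ω => X ω = s) Y
  have hmargY : ∀ t, ∑ s, pr p (fun ω => X ω = s ∧ Y ω = t) = pr p (fun ω => Y ω = t) := by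
    intro t
    have h : ∀ s, pr p (fun ω => X ω = s ∧ Y ω = t) = pr p (fun ω => Y ω = t ∧ X ω = s) :=
      fun s => pr_congr fun ω => by tauto
    simp only [h]
    exact sum_pr_and (fun ω => Y ω = t) X
  have hq1 : ∑ st : S × T, pr p (fun ω => X ω = st.1 ∧ Y ω = st.2) = 1 := by
    rw [Fintype.sum_prod_type]
    simp only [hmargX]
    exact sum_pr_eq_one hp X
  have hqX : ∀ st : S × T, pr p (fun ω => X ω = st.1 ∧ Y ω = st.2) ≤
      pr p (fun ω => X ω = st.1) := fun st => pr_mono hp fun ω h => h.1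
  have hqY : ∀ st : S × T, pr p (fun ω => X ω = st.1 ∧ Y ω = st.2) ≤
      pr p (fun ω => Y ω = st.2) := fun st => pr_mono hp fun ω h => h.2
  have hr1 : ∑ st : S × T, pr p (fun ω => X ω = st.1) * pr p (fun ω => Y ω = st.2) ≤ 1 := by
    rw [Fintype.sum_prod_type]
    simp only [← Finset.mul_sum, sum_pr_eq_one hp Y, mul_one]
    rw [sum_pr_eq_one hp X]
  have hG := gibbs (Finset.univ : Finset (S × T))
      (fun st => pr p (fun ω => X ω = st.1 ∧ Y ω = st.2))
      (fun st => pr p (fun ω => X ω = st.1) * pr p (fun ω => Y ω = st.2))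
      (fun st _ => pr_nonneg hp _)
      (fun st _ => mul_nonneg (pr_nonneg hp _) (pr_nonneg hp _))
      hq1 hr1
      (fun st _ h0 => mul_pos (lt_of_lt_of_le h0 (hqX st)) (lt_of_lt_of_le h0 (hqY st)))
  calc entNat p (fun ω => (X ω, Y ω))
      = ∑ st : S × T, Real.negMulLog (pr p (fun ω => X ω = st.1 ∧ Y ω = st.2)) := by
        unfold entNat
        exact Finset.sum_congr rfl fun st _ => by
          congr 1; exact pr_congr fun ω => by simp [Prod.ext_iff]
    _ ≤ ∑ st : S × T, -(pr p (fun ω => X ω = st.1 ∧ Y ω = st.2) *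
          Real.log (pr p (fun ω => X ω = st.1) * pr p (fun ω => Y ω = st.2))) := hG
    _ = ∑ st : S × T, (-(pr p (fun ω => X ω = st.1 ∧ Y ω = st.2) *
            Real.log (pr p (fun ω => X ω = st.1)))
          + -(pr p (fun ω => X ω = st.1 ∧ Y ω = st.2) *
            Real.log (pr p (fun ω => Y ω = st.2)))) := by
        refine Finset.sum_congr rfl fun st _ => ?_
        rcases eq_or_lt_of_le (pr_nonneg hp (fun ω => X ω = st.1 ∧ Y ω = st.2)) with h0 | h0
        · rw [← h0]; ring
        · rw [Real.log_mul (ne_of_gt (lt_of_lt_of_le h0 (hqX st)))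
            (ne_of_gt (lt_of_lt_of_le h0 (hqY st)))]
          ring
    _ = entNat p X + entNat p Y := by
        rw [Finset.sum_add_distrib]
        congr 1
        · rw [Fintype.sum_prod_type]
          unfold entNat
          refine Finset.sum_congr rfl fun s _ => ?_
          calc ∑ y : T, -((pr p fun ω => X ω = (s, y).1 ∧ Y ω = (s, y).2) *
                Real.log (pr p fun ω => X ω = (s, y).1))
              = -((∑ y : T, pr p fun ω => X ω = s ∧ Y ω = y) *
                Real.log (pr p fun ω => X ω = s)) := by
                rw [Finset.sum_mul, ← Finset.sum_neg_distrib]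
            _ = Real.negMulLog (pr p fun ω => X ω = s) := by
                rw [hmargX s, Real.negMulLog, neg_mul]
        · rw [Fintype.sum_prod_type_right]
          unfold entNat
          refine Finset.sum_congr rfl fun t _ => ?_
          calc ∑ x : S, -((pr p fun ω => X ω = (x, t).1 ∧ Y ω = (x, t).2) *
                Real.log (pr p fun ω => Y ω = (x, t).2))
              = -((∑ x : S, pr p fun ω => X ω = x ∧ Y ω = t) *
                Real.log (pr p fun ω => Y ω = t)) := by
                rw [Finset.sum_mul, ← Finset.sum_neg_distrib]
            _ = Real.negMulLog (pr p fun ω => Y ω = t) := by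
                rw [hmargY t, Real.negMulLog, neg_mul]

/-- If `X` is supported in `B (Y ω)`, then `H(X|Y) ≤ Σ_t P(Y=t) log |B t|` (natural log). -/
lemma condEntNat_le {S T : Type*} [Fintype S] [Fintype T] (hp : IsPMF p)
    (X : Ω → S) (Y : Ω → T) (B : T → Finset S) (hB : ∀ ω, X ω ∈ B (Y ω)) :
    entNat p (fun ω => (X ω, Y ω)) - entNat p Y ≤
      ∑ t, pr p (fun ω => Y ω = t) * Real.log ((B t).card) := by
  have hpair : entNat p (fun ω => (X ω, Y ω)) =
      ∑ t, ∑ s, Real.negMulLog (pr p (fun ω => X ω = s ∧ Y ω = t)) := by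
    unfold entNat
    rw [Fintype.sum_prod_type_right]
    exact Finset.sum_congr rfl fun t _ => Finset.sum_congr rfl fun s _ => by
      congr 1; exact pr_congr fun ω => by simp [Prod.ext_iff]
  rw [hpair]
  unfold entNat
  rw [← Finset.sum_sub_distrib]
  refine Finset.sum_le_sum fun t _ => ?_
  set c := pr p (fun ω => Y ω = t) with hc
  have hmarg : ∑ s, pr p (fun ω => X ω = s ∧ Y ω = t) = c := by
    have h : ∀ s, pr p (fun ω => X ω = s ∧ Y ω = t) = pr p (fun ω => Y ω = t ∧ X ω = s) :=
      fun s => pr_congr fun ω => by tauto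
    simp only [h]
    exact sum_pr_and _ X
  have hle : ∀ s, pr p (fun ω => X ω = s ∧ Y ω = t) ≤ c :=
    fun s => pr_mono hp fun ω h => h.2
  have hout : ∀ s ∉ B t, pr p (fun ω => X ω = s ∧ Y ω = t) = 0 := by
    intro s hs
    refine Finset.sum_eq_zero fun ω _ => if_neg ?_
    rintro ⟨hX, hY⟩
    exact hs (hX ▸ hY ▸ hB ω)
  rcases eq_or_lt_of_le (pr_nonneg hp (fun ω => Y ω = t)) with h0 | h0
  · have hz : ∀ s, pr p (fun ω => X ω = s ∧ Y ω = t) = 0 := fun s =>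
      le_antisymm (le_of_le_of_eq (hle s) h0.symm) (pr_nonneg hp _)
    have hc0 : c = 0 := hc.trans h0.symm
    simp [hz, hc0]
  · rw [← hc] at h0
    have hstep : ∑ s, Real.negMulLog (pr p fun ω => X ω = s ∧ Y ω = t)
        = ∑ s ∈ B t, Real.negMulLog (pr p fun ω => X ω = s ∧ Y ω = t) :=
      (Finset.sum_subset (Finset.subset_univ (B t))
        (fun s _ hs => by rw [hout s hs, Real.negMulLog_zero])).symm
    have hsum1 : ∑ s ∈ B t, pr p (fun ω => X ω = s ∧ Y ω = t) / c = 1 := by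
      rw [← Finset.sum_div,
        Finset.sum_subset (Finset.subset_univ (B t)) (fun s _ hs => hout s hs),
        hmarg, div_self (ne_of_gt h0)]
    have hmax := maxEnt (B t) (fun s => pr p (fun ω => X ω = s ∧ Y ω = t) / c)
      (fun s _ => div_nonneg (pr_nonneg hp _) h0.le) hsum1
    have hterm : ∀ s ∈ B t, Real.negMulLog (pr p fun ω => X ω = s ∧ Y ω = t)
        = (pr p (fun ω => X ω = s ∧ Y ω = t) / c) * Real.negMulLog c
          + c * Real.negMulLog (pr p (fun ω => X ω = s ∧ Y ω = t) / c) := by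
      intro s _
      rw [← Real.negMulLog_mul]
      congr 1
      field_simp
    calc (∑ s, Real.negMulLog (pr p fun ω => X ω = s ∧ Y ω = t)) - Real.negMulLog c
        = (∑ s ∈ B t, ((pr p (fun ω => X ω = s ∧ Y ω = t) / c) * Real.negMulLog c
            + c * Real.negMulLog (pr p (fun ω => X ω = s ∧ Y ω = t) / c)))
            - Real.negMulLog c := by
          rw [hstep, Finset.sum_congr rfl hterm]
      _ = c * ∑ s ∈ B t, Real.negMulLog (pr p (fun ω => X ω = s ∧ Y ω = t) / c) := by
          rw [Finset.sum_add_distrib, ← Finset.sum_mul, hsum1, one_mul, ← Finset.mul_sum]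
          ring
      _ ≤ c * Real.log ((B t).card) := mul_le_mul_of_nonneg_left hmax h0.le

/-- Entropy of a Bool-valued variable is at most `log 2`. -/
lemma entNat_bool_le (hp : IsPMF p) (E : Ω → Bool) : entNat p E ≤ Real.log 2 := by
  have := maxEnt (Finset.univ : Finset Bool) (fun b => pr p (fun ω => E ω = b))
    (fun b _ => pr_nonneg hp _) (sum_pr_eq_one hp E)
  unfold entNat
  simpa using this

end main

lemma card_hammingSphere {D : ℕ} (j : ℕ) (a : Fin D → Bool) :
    (Finset.univ.filter fun x : Fin D → Bool => hammingDist x a = j).card = D.choose j := by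
  conv_rhs => rw [← Fintype.card_fin D, ← Finset.card_univ,
    ← Finset.card_powersetCard j (Finset.univ : Finset (Fin D))]
  apply Finset.card_nbij' (i := fun x => Finset.univ.filter fun i => x i ≠ a i)
    (j := fun s i => if i ∈ s then !(a i) else a i)
  · intro x hx
    simp only [Finset.mem_coe, Finset.mem_filter, Finset.mem_univ, true_and] at hx
    rw [Finset.mem_coe, Finset.mem_powersetCard]
    exact ⟨Finset.subset_univ _, hx⟩
  · intro s hs
    simp only [Finset.mem_coe, Finset.mem_powersetCard] at hs
    simp only [Finset.mem_coe, Finset.mem_filter, Finset.mem_univ, true_and]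
    rw [← hs.2, hammingDist]
    congr 1
    ext i
    by_cases hi : i ∈ s <;> simp [hi]
  · intro x hx
    funext i
    by_cases h : x i = a i <;> simp [h]
    revert h
    cases a i <;> cases x i <;> simp
  · intro s hs
    ext i
    by_cases hi : i ∈ s <;> simp [hi]

lemma card_hammingBall {D : ℕ} (α : ℕ) (a : Fin D → Bool) :
    (Finset.univ.filter fun x : Fin D → Bool => hammingDist x a ≤ α).card = Vball D α := by
  have : (Finset.univ.filter fun x : Fin D → Bool => hammingDist x a ≤ α)
      = (Finset.range (α + 1)).biUnion
          (fun j => Finset.univ.filter fun x : Fin D → Bool => hammingDist x a = j) := by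
    ext x
    simp [Nat.lt_succ_iff]
  rw [this, Finset.card_biUnion, Vball]
  · exact Finset.sum_congr rfl fun j _ => card_hammingSphere j a
  · intro i _ j _ hij
    rw [Function.onFun, Finset.disjoint_left]
    intro x hx1 hx2
    simp only [Finset.mem_filter] at hx1 hx2
    exact hij (hx1.2 ▸ hx2.2)

/-- Combining Lemmas 1 and 2: `H(G | A) ≤ 1 + (1 - p_α) log₂ V(α) + p_α D`, and hence,
if `D > log₂ V(α)`, then
`p_α ≥ (H(G | A) - 1 - log₂ V(α)) / (D - log₂ V(α))`. -/
theorem stmt8 [Fintype Ω] {D : ℕ} (p : Ω → ℝ) (hp : IsPMF p)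
    (G A : Ω → (Fin D → Bool)) (α : ℕ) (hα : α < D)
    (pα : ℝ) (hpα : pα = pr p (fun ω => α < hammingDist (G ω) (A ω))) :
    condEnt p G A ≤ 1 + (1 - pα) * Real.logb 2 (Vball D α) + pα * D ∧
    (Real.logb 2 (Vball D α) < D →
      (condEnt p G A - 1 - Real.logb 2 (Vball D α)) /
          ((D : ℝ) - Real.logb 2 (Vball D α)) ≤ pα) := by
  classical
  set E : Ω → Bool := fun ω => decide (α < hammingDist (G ω) (A ω)) with hE
  have hprE : pr p (fun ω => E ω = true) = pα := by
    rw [hpα]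
    exact pr_congr fun ω => by simp [hE]
  have hprEf : pr p (fun ω => E ω = false) = 1 - pα := by
    have h1 := sum_pr_eq_one hp E
    rw [Fintype.sum_bool] at h1
    linarith [hprE, h1]
  set B : Bool × (Fin D → Bool) → Finset (Fin D → Bool) := fun ea =>
    if ea.1 then Finset.univ else Finset.univ.filter fun x => hammingDist x ea.2 ≤ α with hBdef
  have hB : ∀ ω, G ω ∈ B (E ω, A ω) := by
    intro ω
    by_cases h : α < hammingDist (G ω) (A ω)
    · simp [hBdef, hE, h]
    · simp [hBdef, hE, h, Finset.mem_filter, Nat.le_of_not_lt h]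
  have hinj : Function.Injective (fun ga : (Fin D → Bool) × (Fin D → Bool) =>
      (ga.1, (decide (α < hammingDist ga.1 ga.2), ga.2))) := by
    intro x y h
    simp only [Prod.mk.injEq] at h
    exact Prod.ext h.1 h.2.2
  have hent_eq : entNat p (fun ω => (G ω, A ω)) = entNat p (fun ω => (G ω, (E ω, A ω))) :=
    (entNat_comp_inj (fun ω => (G ω, A ω))
      (fun ga => (ga.1, (decide (α < hammingDist ga.1 ga.2), ga.2))) hinj).symm
  have hcond := condEntNat_le hp G (fun ω => (E ω, A ω)) B hB
  have hsub := entNat_pair_le hp E A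
  have hEle := entNat_bool_le hp E
  have hlog2 : (0:ℝ) < Real.log 2 := Real.log_pos one_lt_two
  have hsum : ∑ t : Bool × (Fin D → Bool),
        pr p (fun ω => (E ω, A ω) = t) * Real.log ((B t).card)
      = pα * ((D : ℝ) * Real.log 2) + (1 - pα) * Real.log ((Vball D α : ℕ) : ℝ) := by
    rw [Fintype.sum_prod_type, Fintype.sum_bool]
    have e1 : ∑ a : Fin D → Bool,
        pr p (fun ω => (E ω, A ω) = (true, a)) * Real.log ((B (true, a)).card)
        = pα * ((D : ℝ) * Real.log 2) := by
      have hterm : ∀ a : Fin D → Bool,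
          pr p (fun ω => (E ω, A ω) = (true, a)) * Real.log ((B (true, a)).card)
          = pr p (fun ω => E ω = true ∧ A ω = a) * ((D : ℝ) * Real.log 2) := by
        intro a
        have h1 : pr p (fun ω => (E ω, A ω) = (true, a))
            = pr p (fun ω => E ω = true ∧ A ω = a) :=
          pr_congr fun ω => by simp [Prod.ext_iff]
        have h2 : (B (true, a)) = Finset.univ := by simp [hBdef]
        rw [h1, h2, Finset.card_univ, Fintype.card_fun, Fintype.card_fin, Fintype.card_bool]
        rw [Nat.cast_pow, Real.log_pow]
        norm_num
      simp only [hterm]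
      rw [← Finset.sum_mul, sum_pr_and (fun ω => E ω = true) A, hprE]
    have e2 : ∑ a : Fin D → Bool,
        pr p (fun ω => (E ω, A ω) = (false, a)) * Real.log ((B (false, a)).card)
        = (1 - pα) * Real.log ((Vball D α : ℕ) : ℝ) := by
      have hterm : ∀ a : Fin D → Bool,
          pr p (fun ω => (E ω, A ω) = (false, a)) * Real.log ((B (false, a)).card)
          = pr p (fun ω => E ω = false ∧ A ω = a) * Real.log ((Vball D α : ℕ) : ℝ) := by
        intro a
        have h1 : pr p (fun ω => (E ω, A ω) = (false, a))
            = pr p (fun ω => E ω = false ∧ A ω = a) :=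
          pr_congr fun ω => by simp [Prod.ext_iff]
        have h2 : (B (false, a)).card = Vball D α := by
          rw [hBdef]
          simpa using card_hammingBall α a
        rw [h1, h2]
      simp only [hterm]
      rw [← Finset.sum_mul, sum_pr_and (fun ω => E ω = false) A, hprEf]
    rw [e1, e2]
  have key : entNat p (fun ω => (G ω, A ω)) - entNat p A
      ≤ Real.log 2 + (1 - pα) * Real.log ((Vball D α : ℕ) : ℝ)
        + pα * ((D : ℝ) * Real.log 2) := by
    have h2 : entNat p (fun ω => (E ω, A ω)) - entNat p A ≤ Real.log 2 := by
      linarith [hsub, hEle]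
    calc entNat p (fun ω => (G ω, A ω)) - entNat p A
        = (entNat p (fun ω => (G ω, (E ω, A ω))) - entNat p (fun ω => (E ω, A ω)))
          + (entNat p (fun ω => (E ω, A ω)) - entNat p A) := by rw [← hent_eq]; ring
      _ ≤ (pα * ((D : ℝ) * Real.log 2) + (1 - pα) * Real.log ((Vball D α : ℕ) : ℝ))
          + Real.log 2 := add_le_add (le_of_le_of_eq hcond hsum) h2
      _ = _ := by ring
  have part1 : condEnt p G A ≤ 1 + (1 - pα) * Real.logb 2 (Vball D α) + pα * D := by
    rw [condEnt, ent_eq_entNat, ent_eq_entNat, ← sub_div, div_le_iff₀ hlog2]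
    calc entNat p (fun ω => (G ω, A ω)) - entNat p A
        ≤ Real.log 2 + (1 - pα) * Real.log ((Vball D α : ℕ) : ℝ)
          + pα * ((D : ℝ) * Real.log 2) := key
      _ = (1 + (1 - pα) * Real.logb 2 (Vball D α) + pα * D) * Real.log 2 := by
          rw [Real.logb]
          field_simp
  refine ⟨part1, fun hD => ?_⟩
  rw [div_le_iff₀ (by linarith)]
  nlinarith [part1]
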